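/- For all real parameters η > 0 and φ > 0, the second raw moment of the PCD is ∑_{x=0}^∞ x²·p(x) = (η² + 2(2φ+1)η + 20φ)/(η²(φ+η)). -/

import Mathlib

lemma choose_cast_eq (n k : ℕ) :
    ((n + k).choose k : ℝ) * (k.factorial : ℝ) = ((n + 1).ascFactorial k : ℝ) := by
  rw [Nat.ascFactorial_eq_factorial_mul_choose]
  push_cast
  ring

/-- The second raw moment of the PCD. -/
theorem pcd_second_moment (η φ : ℝ) (hη : 0 < η) (hφ : 0 < φ) :
    ∑' x : ℕ, (x : ℝ) ^ 2 *
        ((η ^ 2 / ((φ + η) * (1 + η) ^ (x + 4)))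
          * ((1 + η) ^ 3
            + (φ * η ^ 2 / 6) * ((x : ℝ) + 1) * ((x : ℝ) + 2) * ((x : ℝ) + 3)))
      = (η ^ 2 + 2 * (2 * φ + 1) * η + 20 * φ) / (η ^ 2 * (φ + η)) := by
  have h1η : (0:ℝ) < 1 + η := by linarith
  have h1η' : (1:ℝ) + η ≠ 0 := ne_of_gt h1η
  have hφη : φ + η ≠ 0 := by positivity
  have hη' : η ≠ 0 := ne_of_gt hη
  have hr : ‖(1 + η)⁻¹‖ < 1 := by
    rw [Real.norm_eq_abs, abs_of_pos (by positivity)]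
    rw [inv_lt_one_iff₀]
    right; linarith
  have H : ∀ k : ℕ, HasSum (fun n : ℕ ↦ ((n + k).choose k : ℝ) * ((1 + η)⁻¹) ^ n)
      (1 / (1 - (1 + η)⁻¹) ^ (k + 1)) :=
    fun k ↦ hasSum_choose_mul_geometric_of_norm_lt_one k hr
  set c1 : ℝ := η ^ 2 / ((φ + η) * (1 + η)) with hc1
  set c2 : ℝ := φ * η ^ 4 / (6 * (φ + η) * (1 + η) ^ 4) with hc2
  have Htot := ((((((H 0).mul_left c1).add ((H 1).mul_left (-3 * c1))).add
      ((H 2).mul_left (2 * c1))).add ((H 3).mul_left (96 * c2))).add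
      ((H 4).mul_left (-216 * c2))).add ((H 5).mul_left (120 * c2))
  have key : (fun x : ℕ ↦ (x : ℝ) ^ 2 *
        ((η ^ 2 / ((φ + η) * (1 + η) ^ (x + 4)))
          * ((1 + η) ^ 3
            + (φ * η ^ 2 / 6) * ((x : ℝ) + 1) * ((x : ℝ) + 2) * ((x : ℝ) + 3))))
      = (fun n : ℕ ↦ c1 * (((n + 0).choose 0 : ℝ) * ((1 + η)⁻¹) ^ n)
          + -3 * c1 * (((n + 1).choose 1 : ℝ) * ((1 + η)⁻¹) ^ n)
          + 2 * c1 * (((n + 2).choose 2 : ℝ) * ((1 + η)⁻¹) ^ n)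
          + 96 * c2 * (((n + 3).choose 3 : ℝ) * ((1 + η)⁻¹) ^ n)
          + -216 * c2 * (((n + 4).choose 4 : ℝ) * ((1 + η)⁻¹) ^ n)
          + 120 * c2 * (((n + 5).choose 5 : ℝ) * ((1 + η)⁻¹) ^ n)) := by
    funext n
    have e0 := choose_cast_eq n 0
    have e1 := choose_cast_eq n 1
    have e2 := choose_cast_eq n 2
    have e3 := choose_cast_eq n 3
    have e4 := choose_cast_eq n 4
    have e5 := choose_cast_eq n 5
    simp only [Nat.ascFactorial, Nat.factorial] at e0 e1 e2 e3 e4 e5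
    push_cast at e0 e1 e2 e3 e4 e5
    have hpn : (1 + η) ^ n ≠ 0 := pow_ne_zero _ h1η'
    have hc0' : ((n + 0).choose 0 : ℝ) = 1 := by linear_combination e0
    have hc1' : ((n + 1).choose 1 : ℝ) = n + 1 := by linear_combination e1
    have hc2' : ((n + 2).choose 2 : ℝ) = (n + 1) * (n + 2) / 2 := by
      linear_combination e2 / 2
    have hc3' : ((n + 3).choose 3 : ℝ) = (n + 1) * (n + 2) * (n + 3) / 6 := by
      linear_combination e3 / 6
    have hc4' : ((n + 4).choose 4 : ℝ) = (n + 1) * (n + 2) * (n + 3) * (n + 4) / 24 := by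
      linear_combination e4 / 24
    have hc5' : ((n + 5).choose 5 : ℝ)
        = (n + 1) * (n + 2) * (n + 3) * (n + 4) * (n + 5) / 120 := by
      linear_combination e5 / 120
    rw [hc0', hc1', hc2', hc3', hc4', hc5', hc1, hc2, inv_pow]
    field_simp
    ring
  rw [key, Htot.tsum_eq]
  have h1r : 1 - (1 + η)⁻¹ = η / (1 + η) := by field_simp; ring
  rw [h1r, hc1, hc2]
  simp only [one_div, div_pow, inv_div]
  field_simp
  ring
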